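/- Let d, n ≥ 1 and M ≥ 0. There exists a constant C > 0, depending only on d, n and M, with the following property. Let W : ℝ^d → M_n(ℂ) be measurable with Frobenius norm |W(x)| ≤ M almost everywhere, and let K ∈ (0,1] be such that ( ∫_{ℝ^d} |W(x) u(x)|² dx )^{1/2} ≤ K ‖u‖_{H¹} for every continuously differentiable compactly supported u : ℝ^d → ℂⁿ. Then, setting η := K^{1/2}, one has η^{−d} ∫_{□_γ^η} |W(x)|² dx ≤ C K^{1/2} for every γ ∈ ℤ^d. -/

import Mathlib

open MeasureTheory

noncomputable section

/-- `ℝ^d` with its Euclidean structure. -/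
abbrev Ed (d : ℕ) := EuclideanSpace ℝ (Fin d)

/-- `ℂⁿ` with its Euclidean (Hermitian) structure. -/
abbrev Cn (n : ℕ) := EuclideanSpace ℂ (Fin n)

/-- The cell `□_γ^η = η•γ + [0,η]^d` of the rescaled lattice `ηℤ^d`. -/
def cell (d : ℕ) (η : ℝ) (γ : Fin d → ℤ) : Set (Ed d) :=
  {x | ∀ i, η * γ i ≤ x i ∧ x i ≤ η * γ i + η}

/-- Frobenius norm of a complex `n × n` matrix. -/
def frob {n : ℕ} (A : Matrix (Fin n) (Fin n) ℂ) : ℝ :=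
  Real.sqrt (∑ i, ∑ k, ‖A i k‖ ^ 2)

/-- Action of a matrix on a vector of `ℂⁿ`. -/
def matAct {n : ℕ} (A : Matrix (Fin n) (Fin n) ℂ) (v : Cn n) : Cn n :=
  WithLp.toLp 2 (fun i => ∑ k, A i k * v k)

/-- The `H¹` norm `(∫|u|² + ∫‖Du‖²)^{1/2}`, `Du` the total derivative. -/
def hnorm {d n : ℕ} (u : Ed d → Cn n) : ℝ :=
  Real.sqrt ((∫ x, ‖u x‖ ^ 2) + ∫ x, ‖fderiv ℝ u x‖ ^ 2)

/-- The cell is a measurable set. -/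
lemma cell_measurableSet (d : ℕ) (η : ℝ) (γ : Fin d → ℤ) : MeasurableSet (cell d η γ) := by
  have : cell d η γ = ⋂ i, (⇑(EuclideanSpace.proj (𝕜 := ℝ) i)) ⁻¹'
      (Set.Icc (η * γ i) (η * γ i + η)) := by
    ext x; simp [cell, Set.mem_iInter, Set.mem_Icc, EuclideanSpace.proj]
  rw [this]
  exact MeasurableSet.iInter fun i =>
    (isClosed_Icc.preimage (EuclideanSpace.proj i).continuous).measurableSet

/-- Key norm computation for the matrix acting on a scaled basis vector. -/
lemma matAct_single_norm_sq {n : ℕ} (A : Matrix (Fin n) (Fin n) ℂ) (r : ℝ) (j : Fin n) :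
    ‖matAct A (r • EuclideanSpace.single j (1:ℂ))‖ ^ 2 = r ^ 2 * ∑ i, ‖A i j‖ ^ 2 := by
  have hv : ∀ i, matAct A (r • EuclideanSpace.single j (1:ℂ)) i = (r : ℂ) * A i j := by
    intro i
    simp only [matAct, PiLp.toLp_apply, PiLp.smul_apply, EuclideanSpace.single_apply, smul_eq_mul]
    rw [Finset.sum_eq_single j]
    · simp [mul_comm]
    · intro k _ hk; simp [hk]
    · simp
  rw [EuclideanSpace.norm_eq, Real.sq_sqrt (by positivity), Finset.mul_sum]
  congr 1; ext i
  rw [hv i, norm_mul, mul_pow]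
  norm_num

/-- Change of variables for integrals under the affine map `x ↦ η⁻¹ • (x - z)`. -/
lemma integral_affine_cov (d : ℕ) (η : ℝ) (hη : 0 < η) (G : Ed d → ℝ) (z : Ed d) :
    ∫ x, G (η⁻¹ • (x - z)) = η ^ d * ∫ x, G x := by
  have h1 : ∫ x, G (η⁻¹ • (x - z)) = ∫ x, G (η⁻¹ • x) :=
    integral_sub_right_eq_self (fun x => G (η⁻¹ • x)) z
  rw [h1, Measure.integral_comp_inv_smul volume G η, finrank_euclideanSpace_fin,
    abs_of_nonneg (pow_nonneg hη.le _), smul_eq_mul]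

set_option maxHeartbeats 1000000 in
/-- Converse direction of Theorem 2.6 on `Ω = ℝ^d`: if
`‖Wu‖_{L²} ≤ K‖u‖_{H¹}` for all `C¹` compactly supported `u`, then with
`η := K^{1/2}` the cell-averaged `L²` norms `η^{-d}∫_{□_γ^η}|W|²` are bounded
by `C K^{1/2}` for every `γ ∈ ℤ^d`, with `C` depending only on `d`, `n`, `M`. -/
theorem stmt_9 (d n : ℕ) (hd : 1 ≤ d) (hn : 1 ≤ n) (M : ℝ) (hM : 0 ≤ M) :
    ∃ C : ℝ, 0 < C ∧
      ∀ (W : Ed d → Matrix (Fin n) (Fin n) ℂ),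
        (∀ p q, Measurable fun x => W x p q) →
        (∀ᵐ x, frob (W x) ≤ M) →
        ∀ K : ℝ, 0 < K → K ≤ 1 →
        (∀ u : Ed d → Cn n, ContDiff ℝ 1 u → HasCompactSupport u →
          Real.sqrt (∫ x, ‖matAct (W x) (u x)‖ ^ 2) ≤ K * hnorm u) →
        ∀ γ : Fin d → ℤ,
          ((Real.sqrt K) ^ d)⁻¹ *
              ∫ x in cell d (Real.sqrt K) γ, (frob (W x)) ^ 2
            ≤ C * Real.sqrt K := by
  classical
  have hd0 : (0:ℝ) < d := by exact_mod_cast Nat.pos_of_ne_zero (by omega)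
  -- the fixed reference bump function
  set ψ : ContDiffBump (0 : Ed d) :=
    ⟨Real.sqrt d, 2 * Real.sqrt d, Real.sqrt_pos.2 hd0,
      by nlinarith [Real.sqrt_pos.2 hd0]⟩ with hψdef
  set A : ℝ := ∫ x, (ψ x) ^ 2 with hAdef
  set B : ℝ := ∫ x, ‖fderiv ℝ (⇑ψ) x‖ ^ 2 with hBdef
  have hA0 : 0 ≤ A := integral_nonneg fun x => by positivity
  have hB0 : 0 ≤ B := integral_nonneg fun x => by positivity
  refine ⟨n * (A + B) + 1, by positivity, ?_⟩
  intro W hWm hWM K hK0 hK1 hyp γ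
  set η : ℝ := Real.sqrt K with hηdef
  have hη0 : 0 < η := Real.sqrt_pos.2 hK0
  have hη1 : η ≤ 1 := by
    rw [hηdef, show (1:ℝ) = Real.sqrt 1 by simp]
    exact Real.sqrt_le_sqrt hK1
  have hη2 : η ^ 2 = K := Real.sq_sqrt hK0.le
  have hKη : K ≤ η := by
    nlinarith [hη2, hη0]
  -- the translated/rescaled bump
  set z : Ed d := WithLp.toLp 2 (fun i => η * γ i : Fin d → ℝ) with hzdef
  set φ : Ed d → ℝ := fun x => ψ (η⁻¹ • (x - z)) with hφdef
  have hψsm : ContDiff ℝ 1 (⇑ψ) := ψ.contDiff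
  have hmap : ContDiff ℝ 1 (fun x : Ed d => η⁻¹ • (x - z)) :=
    (contDiff_id.sub contDiff_const).const_smul η⁻¹
  have hφ_smooth : ContDiff ℝ 1 φ := hψsm.comp hmap
  have hφ_supp : HasCompactSupport φ :=
    ψ.hasCompactSupport.comp_homeomorph
      ((Homeomorph.subRight z).trans (Homeomorph.smulOfNeZero η⁻¹ (inv_ne_zero hη0.ne')))
  have hφ_nonneg : ∀ x, 0 ≤ φ x := fun x => ψ.nonneg
  have hφ_le_one : ∀ x, φ x ≤ 1 := fun x => ψ.le_one
  have hφ_one : ∀ x ∈ cell d η γ, φ x = 1 := by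
    intro x hx
    apply ψ.one_of_mem_closedBall
    rw [Metric.mem_closedBall, dist_zero_right, EuclideanSpace.norm_eq]
    apply Real.sqrt_le_sqrt
    calc ∑ i, ‖(η⁻¹ • (x - z)) i‖ ^ 2
        ≤ ∑ _i : Fin d, (1:ℝ) := by
          apply Finset.sum_le_sum
          intro i _
          have h1 := (hx i).1
          have h2 := (hx i).2
          have hco : (η⁻¹ • (x - z)) i = η⁻¹ * (x i - η * γ i) := by
            simp [hzdef, PiLp.smul_apply, PiLp.sub_apply, smul_eq_mul]
          have hnn : 0 ≤ η⁻¹ * (x i - η * γ i) :=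
            mul_nonneg (inv_nonneg.2 hη0.le) (by linarith)
          have hle : η⁻¹ * (x i - η * γ i) ≤ 1 := by
            have hd2 : x i - η * γ i ≤ η := by linarith
            calc η⁻¹ * (x i - η * γ i) ≤ η⁻¹ * η :=
                  mul_le_mul_of_nonneg_left hd2 (inv_nonneg.2 hη0.le)
              _ = 1 := inv_mul_cancel₀ hη0.ne'
          rw [hco, Real.norm_eq_abs, abs_of_nonneg hnn]
          nlinarith
      _ = (d : ℝ) := by simp
  -- derivative of φ
  have hφ_fderiv : ∀ x, fderiv ℝ φ x = η⁻¹ • fderiv ℝ (⇑ψ) (η⁻¹ • (x - z)) := by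
    intro x
    have hL : HasFDerivAt (fun x : Ed d => η⁻¹ • (x - z))
        (η⁻¹ • ContinuousLinearMap.id ℝ (Ed d)) x :=
      ((hasFDerivAt_id x).sub_const z).const_smul η⁻¹
    have hψ' : HasFDerivAt (⇑ψ) (fderiv ℝ (⇑ψ) (η⁻¹ • (x - z))) (η⁻¹ • (x - z)) :=
      (hψsm.differentiable one_ne_zero _).hasFDerivAt
    have h := (hψ'.comp x hL).fderiv
    simp only [Function.comp_def] at h
    rw [hφdef]
    rw [h, ContinuousLinearMap.comp_smul, ContinuousLinearMap.comp_id]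
  -- the two basic integrals of φ
  have hIφ : ∫ x, φ x ^ 2 = η ^ d * A := by
    rw [hAdef]
    exact integral_affine_cov d η hη0 (fun y => ψ y ^ 2) z
  have hIφ' : ∫ x, ‖fderiv ℝ φ x‖ ^ 2 = η⁻¹ ^ 2 * (η ^ d * B) := by
    have hpt : ∀ x, ‖fderiv ℝ φ x‖ ^ 2
        = η⁻¹ ^ 2 * ‖fderiv ℝ (⇑ψ) (η⁻¹ • (x - z))‖ ^ 2 := by
      intro x
      rw [hφ_fderiv x, norm_smul, Real.norm_eq_abs, abs_of_nonneg (inv_nonneg.2 hη0.le),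
        mul_pow]
    rw [show (fun x => ‖fderiv ℝ φ x‖ ^ 2)
        = fun x => η⁻¹ ^ 2 * ‖fderiv ℝ (⇑ψ) (η⁻¹ • (x - z))‖ ^ 2 from funext hpt]
    rw [integral_const_mul, hBdef,
      integral_affine_cov d η hη0 (fun y => ‖fderiv ℝ (⇑ψ) y‖ ^ 2) z]
  -- the test functions
  set u : Fin n → Ed d → Cn n :=
    fun j x => φ x • EuclideanSpace.single j (1:ℂ) with hudef
  have hu_cd : ∀ j, ContDiff ℝ 1 (u j) :=
    fun j => hφ_smooth.smul contDiff_const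
  have hu_cs : ∀ j, HasCompactSupport (u j) := by
    intro j
    apply hφ_supp.mono'
    intro x hx
    apply subset_tsupport φ
    simp only [Function.mem_support] at hx ⊢
    intro h0
    apply hx
    simp [hudef, h0]
  -- hnorm of the test functions
  have hu_norm : ∀ j, (hnorm (u j)) ^ 2 = η ^ d * A + η⁻¹ ^ 2 * (η ^ d * B) := by
    intro j
    have e1 : ∀ x, ‖u j x‖ ^ 2 = φ x ^ 2 := by
      intro x
      rw [hudef]
      simp only
      rw [norm_smul, EuclideanSpace.norm_single, norm_one, mul_one, Real.norm_eq_abs, sq_abs]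
    have e2 : ∀ x, ‖fderiv ℝ (u j) x‖ ^ 2 = ‖fderiv ℝ φ x‖ ^ 2 := by
      intro x
      have hfd : fderiv ℝ (u j) x = (fderiv ℝ φ x).smulRight (EuclideanSpace.single j (1:ℂ)) :=
        ((hφ_smooth.differentiable one_ne_zero x).hasFDerivAt.smul_const _).fderiv
      rw [hfd, ContinuousLinearMap.norm_smulRight_apply, EuclideanSpace.norm_single, norm_one,
        mul_one]
    have h1 : (∫ x, ‖u j x‖ ^ 2) = η ^ d * A := by
      rw [show (fun x => ‖u j x‖ ^ 2) = fun x => φ x ^ 2 from funext e1]; exact hIφ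
    have h2 : (∫ x, ‖fderiv ℝ (u j) x‖ ^ 2) = η⁻¹ ^ 2 * (η ^ d * B) := by
      rw [show (fun x => ‖fderiv ℝ (u j) x‖ ^ 2) = fun x => ‖fderiv ℝ φ x‖ ^ 2 from funext e2]
      exact hIφ'
    rw [hnorm, h1, h2, Real.sq_sqrt (by positivity)]
  -- the functions F j
  set F : Fin n → Ed d → ℝ := fun j x => φ x ^ 2 * ∑ i, ‖W x i j‖ ^ 2 with hFdef
  have hF_nonneg : ∀ j x, 0 ≤ F j x := fun j x =>
    mul_nonneg (sq_nonneg _) (Finset.sum_nonneg fun i _ => sq_nonneg _)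
  have hF_meas : ∀ j, Measurable (F j) := by
    intro j
    exact ((hφ_smooth.continuous.measurable).pow_const 2).mul
      (Finset.measurable_sum _ fun i _ => ((hWm i j).norm.pow_const 2))
  -- a.e. bound by M² on supp φ, giving integrability
  have hF_int : ∀ j, Integrable (F j) := by
    intro j
    refine Integrable.mono' (g := (tsupport φ).indicator fun _ => M ^ 2) ?_
      (hF_meas j).aestronglyMeasurable ?_
    · exact (IntegrableOn.integrable_indicator
        (integrableOn_const hφ_supp.measure_lt_top.ne)
        (isClosed_tsupport φ).measurableSet)
    · filter_upwards [hWM] with x hx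
      rw [Real.norm_eq_abs, abs_of_nonneg (hF_nonneg j x)]
      by_cases hxs : x ∈ tsupport φ
      · rw [Set.indicator_of_mem hxs]
        have hsum : ∑ i, ‖W x i j‖ ^ 2 ≤ ∑ i, ∑ k, ‖W x i k‖ ^ 2 :=
          Finset.sum_le_sum fun i _ =>
            Finset.single_le_sum (f := fun k => ‖W x i k‖ ^ 2) (fun k _ => sq_nonneg _)
              (Finset.mem_univ j)
        have hfr : ∑ i, ∑ k, ‖W x i k‖ ^ 2 ≤ M ^ 2 := by
          have hs := Real.sq_sqrt (show (0:ℝ) ≤ ∑ i, ∑ k, ‖W x i k‖ ^ 2 by positivity)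
          have h2 : frob (W x) ^ 2 ≤ M ^ 2 := pow_le_pow_left₀ (Real.sqrt_nonneg _) hx 2
          rw [frob] at h2; rw [← hs]; exact h2
        have hφ2 : φ x ^ 2 ≤ 1 := by nlinarith [hφ_le_one x, hφ_nonneg x]
        have hsnn : 0 ≤ ∑ i, ‖W x i j‖ ^ 2 := Finset.sum_nonneg fun i _ => sq_nonneg _
        calc F j x = φ x ^ 2 * ∑ i, ‖W x i j‖ ^ 2 := by rw [hFdef]
          _ ≤ 1 * M ^ 2 := mul_le_mul hφ2 (le_trans hsum hfr) hsnn zero_le_one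
          _ = M ^ 2 := one_mul _
      · rw [Set.indicator_of_notMem hxs]
        have : φ x = 0 := image_eq_zero_of_notMem_tsupport hxs
        rw [hFdef]; simp [this]
  -- key estimate on each ∫ F j
  have hF_bound : ∀ j, (∫ x, F j x) ≤ η ^ d * (η * (A + B)) := by
    intro j
    have heq : ∀ x, F j x = ‖matAct (W x) (u j x)‖ ^ 2 := fun x =>
      (matAct_single_norm_sq (W x) (φ x) j).symm
    have hnonneg : (0:ℝ) ≤ ∫ x, ‖matAct (W x) (u j x)‖ ^ 2 :=
      integral_nonneg fun x => by positivity
    have h1 := hyp (u j) (hu_cd j) (hu_cs j)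
    have h2 : (∫ x, ‖matAct (W x) (u j x)‖ ^ 2) ≤ (K * hnorm (u j)) ^ 2 := by
      have h := pow_le_pow_left₀ (Real.sqrt_nonneg _) h1 2
      rwa [Real.sq_sqrt hnonneg] at h
    have h3 : (K * hnorm (u j)) ^ 2 = η ^ d * (K ^ 2 * A + K * B) := by
      have hinv : η⁻¹ ^ 2 = K⁻¹ := by rw [inv_pow, hη2]
      rw [mul_pow, hu_norm j, hinv]
      field_simp
    have h4 : η ^ d * (K ^ 2 * A + K * B) ≤ η ^ d * (η * (A + B)) := by
      apply mul_le_mul_of_nonneg_left _ (pow_nonneg hη0.le d)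
      have hK2 : K ^ 2 ≤ K := by nlinarith
      nlinarith
    calc (∫ x, F j x) = ∫ x, ‖matAct (W x) (u j x)‖ ^ 2 := by
          rw [show (fun x => F j x) = fun x => ‖matAct (W x) (u j x)‖ ^ 2 from funext heq]
      _ ≤ (K * hnorm (u j)) ^ 2 := h2
      _ = η ^ d * (K ^ 2 * A + K * B) := h3
      _ ≤ η ^ d * (η * (A + B)) := h4
  -- assemble
  have hcell := cell_measurableSet d η γ
  have hSeq : (∫ x in cell d η γ, frob (W x) ^ 2) = ∫ x in cell d η γ, ∑ j, F j x := by
    apply setIntegral_congr_fun hcell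
    intro x hx
    simp only [frob]
    rw [Real.sq_sqrt (by positivity)]
    have : ∀ j, F j x = ∑ i, ‖W x i j‖ ^ 2 := by
      intro j
      rw [hFdef]
      simp only [hφ_one x hx, one_pow, one_mul]
    rw [funext this]
    exact Finset.sum_comm
  have hle1 : (∫ x in cell d η γ, ∑ j, F j x) ≤ ∫ x, ∑ j, F j x :=
    setIntegral_le_integral (integrable_finset_sum _ fun j _ => hF_int j)
      (Filter.Eventually.of_forall fun x => Finset.sum_nonneg fun j _ => hF_nonneg j x)
  have hle2 : (∫ x, ∑ j, F j x) = ∑ j, ∫ x, F j x :=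
    integral_finset_sum _ fun j _ => hF_int j
  have hle3 : (∑ j : Fin n, ∫ x, F j x) ≤ n * (η ^ d * (η * (A + B))) := by
    calc (∑ j : Fin n, ∫ x, F j x) ≤ ∑ _j : Fin n, η ^ d * (η * (A + B)) :=
          Finset.sum_le_sum fun j _ => hF_bound j
      _ = n * (η ^ d * (η * (A + B))) := by
          rw [Finset.sum_const, Finset.card_univ, Fintype.card_fin, nsmul_eq_mul]
  have htotal : (∫ x in cell d η γ, frob (W x) ^ 2) ≤ n * (η ^ d * (η * (A + B))) := by
    rw [hSeq]
    calc (∫ x in cell d η γ, ∑ j, F j x) ≤ ∫ x, ∑ j, F j x := hle1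
      _ = ∑ j, ∫ x, F j x := hle2
      _ ≤ n * (η ^ d * (η * (A + B))) := hle3
  have hηd : (0:ℝ) < η ^ d := pow_pos hη0 d
  calc (η ^ d)⁻¹ * ∫ x in cell d η γ, frob (W x) ^ 2
      ≤ (η ^ d)⁻¹ * (n * (η ^ d * (η * (A + B)))) :=
        mul_le_mul_of_nonneg_left htotal (inv_nonneg.2 hηd.le)
    _ = n * (A + B) * η := by field_simp
    _ ≤ (n * (A + B) + 1) * η := by nlinarith [hA0, hB0, hη0]

end
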